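/- For all p, x, q, y ∈ ℝ^d and all vectors λ, ξ ∈ ℝ^d chosen (entrywise) to avoid the degenerate values making both weighted averages vanish while inputs don't, there exists a symplectic matrix M ∈ ℝ^{4d×4d} with M(p,x,q,y)ᵀ = (p̃, p̃, q̃, q̃)ᵀ, where p̃ᵏ = λᵏpᵏ + (1-λᵏ)xᵏ and q̃ᵏ = ξᵏqᵏ + (1-ξᵏ)yᵏ. Precisely: for each index k with (pᵏ)²+(xᵏ)²+(qᵏ)²+(yᵏ)² ≠ 0 assume not both p̃ᵏ = 0 and q̃ᵏ = 0. -/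

import Mathlib

open Matrix

/-- The matrix of the symplectic form `Σᵢ (dpⁱ ∧ dqⁱ + dxⁱ ∧ dyⁱ)` on
`ℝ^{4d}`, coordinates ordered `((p, x), (q, y))`. -/
def Jhat (d : ℕ) :
    Matrix ((Fin d ⊕ Fin d) ⊕ (Fin d ⊕ Fin d)) ((Fin d ⊕ Fin d) ⊕ (Fin d ⊕ Fin d)) ℝ :=
  Matrix.fromBlocks 0 1 (-1) 0

section Aux

variable {n : Type*} [Fintype n] [DecidableEq n]

lemma myVecMulVec_mul (a : n → ℝ) (b : n → ℝ) (C : Matrix n n ℝ) :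
    vecMulVec a b * C = vecMulVec a (b ᵥ* C) := by
  ext i j
  simp only [vecMulVec_apply, Matrix.mul_apply, vecMul, dotProduct, Finset.mul_sum]
  exact Finset.sum_congr rfl fun _ _ => by ring

lemma myMul_vecMulVec (a : n → ℝ) (b : n → ℝ) (C : Matrix n n ℝ) :
    C * vecMulVec a b = vecMulVec (C *ᵥ a) b := by
  ext i j
  simp only [vecMulVec_apply, Matrix.mul_apply, mulVec, dotProduct, Finset.sum_mul]
  exact Finset.sum_congr rfl fun _ _ => by ring

lemma myVecMulVec_transpose (a : n → ℝ) (b : n → ℝ) :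
    (vecMulVec a b)ᵀ = vecMulVec b a := by
  ext i j
  simp [vecMulVec_apply, mul_comm]

lemma myVecMulVec_mulVec (a b z : n → ℝ) :
    vecMulVec a b *ᵥ z = (b ⬝ᵥ z) • a := by
  ext i
  simp [vecMulVec_apply, mulVec, dotProduct, Finset.mul_sum, mul_assoc, mul_comm,
    mul_left_comm, Finset.sum_mul]

lemma vecMul_antisym (J : Matrix n n ℝ) (hJ : Jᵀ = -J) (u : n → ℝ) :
    u ᵥ* J = -(J *ᵥ u) := by
  calc u ᵥ* J = u ᵥ* Jᵀᵀ := by rw [transpose_transpose]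
    _ = Jᵀ *ᵥ u := vecMul_transpose _ _
    _ = (-J) *ᵥ u := by rw [hJ]
    _ = -(J *ᵥ u) := neg_mulVec _ _

lemma self_form_zero (J : Matrix n n ℝ) (hJ : Jᵀ = -J) (u : n → ℝ) :
    u ⬝ᵥ (J *ᵥ u) = 0 := by
  have h1 : u ⬝ᵥ (J *ᵥ u) = (u ᵥ* J) ⬝ᵥ u := dotProduct_mulVec u J u
  have h2 : (u ᵥ* J) ⬝ᵥ u = -(u ⬝ᵥ (J *ᵥ u)) := by
    rw [vecMul_antisym J hJ, neg_dotProduct, dotProduct_comm]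
  linarith

/-- A symplectic transvection. -/
noncomputable def trv (J : Matrix n n ℝ) (c : ℝ) (u : n → ℝ) : Matrix n n ℝ :=
  1 + c • vecMulVec u (J *ᵥ u)

lemma trv_symplectic (J : Matrix n n ℝ) (hJ : Jᵀ = -J) (c : ℝ) (u : n → ℝ) :
    (trv J c u)ᵀ * J * trv J c u = J := by
  set b := J *ᵥ u with hb
  have hub : u ᵥ* J = -b := vecMul_antisym J hJ u
  have hbu : b ⬝ᵥ u = 0 := by
    rw [dotProduct_comm]; exact self_form_zero J hJ u
  have hT : (trv J c u)ᵀ = 1 + c • vecMulVec b u := by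
    simp [trv, transpose_add, transpose_smul, myVecMulVec_transpose, hb]
  have hNJ : vecMulVec b u * J = -vecMulVec b b := by
    rw [myVecMulVec_mul, hub]
    ext i j; simp [vecMulVec_apply]
  have hJN : J * vecMulVec u b = vecMulVec b b := by
    rw [myMul_vecMulVec]
  have hNN : vecMulVec b b * vecMulVec u b = 0 := by
    rw [myVecMulVec_mul]
    have : b ᵥ* vecMulVec u b = (b ⬝ᵥ u) • b := by
      ext j; simp [vecMul, vecMulVec_apply, dotProduct, Finset.sum_mul, mul_assoc]
    rw [this, hbu]
    ext i j; simp [vecMulVec_apply]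
  rw [hT, trv]
  have e1 : (1 + c • vecMulVec b u) * J * (1 + c • vecMulVec u b) =
      J + c • (J * vecMulVec u b) + c • (vecMulVec b u * J) +
        (c * c) • (vecMulVec b u * J * vecMulVec u b) := by
    simp only [Matrix.add_mul, Matrix.mul_add, Matrix.one_mul, Matrix.mul_one,
      Matrix.smul_mul, Matrix.mul_smul, smul_smul, smul_add]
    abel
  rw [e1, hNJ, hJN, Matrix.neg_mul, hNN]
  simp [smul_neg]

lemma trv_mulVec (J : Matrix n n ℝ) (c : ℝ) (u z : n → ℝ) :
    trv J c u *ᵥ z = z + (c * ((J *ᵥ u) ⬝ᵥ z)) • u := by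
  rw [trv, add_mulVec, one_mulVec, smul_mulVec, myVecMulVec_mulVec]
  rw [smul_smul]

lemma mul_symplectic (J A B : Matrix n n ℝ) (hA : Aᵀ * J * A = J) (hB : Bᵀ * J * B = J) :
    (A * B)ᵀ * J * (A * B) = J := by
  rw [transpose_mul]
  calc Bᵀ * Aᵀ * J * (A * B) = Bᵀ * (Aᵀ * J * A) * B := by simp only [Matrix.mul_assoc]
    _ = Bᵀ * J * B := by rw [hA]
    _ = J := hB

lemma step_trans (J : Matrix n n ℝ) (hJ : Jᵀ = -J) (v w : n → ℝ)
    (h : v ⬝ᵥ (J *ᵥ w) ≠ 0) :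
    ∃ M : Matrix n n ℝ, Mᵀ * J * M = J ∧ M *ᵥ v = w := by
  refine ⟨trv J (1 / (v ⬝ᵥ (J *ᵥ w))) (w - v), trv_symplectic J hJ _ _, ?_⟩
  rw [trv_mulVec]
  have hvJv : v ⬝ᵥ (J *ᵥ v) = 0 := self_form_zero J hJ v
  have hdp : (J *ᵥ (w - v)) ⬝ᵥ v = v ⬝ᵥ (J *ᵥ w) := by
    rw [dotProduct_comm, mulVec_sub, dotProduct_sub, hvJv, sub_zero]
  rw [hdp, one_div, inv_mul_cancel₀ h, one_smul]
  abel

lemma exists_symplectic_mulVec (J : Matrix n n ℝ) (hJ : Jᵀ = -J) (hJ2 : J * J = -1)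
    (v w : n → ℝ) (hv : v ≠ 0) (hw : w ≠ 0) :
    ∃ M : Matrix n n ℝ, Mᵀ * J * M = J ∧ M *ᵥ v = w := by
  by_cases h : v ⬝ᵥ (J *ᵥ w) ≠ 0
  · exact step_trans J hJ v w h
  push_neg at h
  -- find u with v ⬝ᵥ J u ≠ 0 and u ⬝ᵥ J w ≠ 0
  have key : ∀ z : n → ℝ, z ≠ 0 → z ⬝ᵥ (J *ᵥ (-(J *ᵥ z))) = z ⬝ᵥ z := by
    intro z hz
    rw [mulVec_neg, mulVec_mulVec, hJ2]
    simp [Matrix.neg_mulVec]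
  have hvv : v ⬝ᵥ v ≠ 0 := fun hc => hv (by
    have := (dotProduct_self_eq_zero (v := v)).mp hc; exact this)
  have hww : w ⬝ᵥ w ≠ 0 := fun hc => hw (by
    have := (dotProduct_self_eq_zero (v := w)).mp hc; exact this)
  set u1 : n → ℝ := -(J *ᵥ v) with hu1
  set u2 : n → ℝ := -(J *ᵥ w) with hu2
  have hvu1 : v ⬝ᵥ (J *ᵥ u1) = v ⬝ᵥ v := key v hv
  have hwu2 : w ⬝ᵥ (J *ᵥ u2) = w ⬝ᵥ w := key w hw
  -- antisymmetry of the form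
  have anti : ∀ a b : n → ℝ, a ⬝ᵥ (J *ᵥ b) = -(b ⬝ᵥ (J *ᵥ a)) := by
    intro a b
    rw [dotProduct_mulVec, vecMul_antisym J hJ, neg_dotProduct, dotProduct_comm]
  obtain ⟨u, hvu, huw⟩ : ∃ u : n → ℝ, v ⬝ᵥ (J *ᵥ u) ≠ 0 ∧ u ⬝ᵥ (J *ᵥ w) ≠ 0 := by
    by_cases h1 : u1 ⬝ᵥ (J *ᵥ w) ≠ 0
    · exact ⟨u1, by rw [hvu1]; exact hvv, h1⟩
    by_cases h2 : v ⬝ᵥ (J *ᵥ u2) ≠ 0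
    · refine ⟨u2, h2, ?_⟩
      rw [anti u2 w, hwu2]
      simpa using hww
    push_neg at h1 h2
    refine ⟨u1 + u2, ?_, ?_⟩
    · rw [mulVec_add, dotProduct_add, hvu1, h2, add_zero]; exact hvv
    · rw [add_dotProduct, h1, zero_add, anti u2 w, hwu2]
      simpa using hww
  obtain ⟨M1, hM1s, hM1v⟩ := step_trans J hJ v u hvu
  obtain ⟨M2, hM2s, hM2v⟩ := step_trans J hJ u w huw
  refine ⟨M2 * M1, mul_symplectic J M2 M1 hM2s hM1s, ?_⟩
  rw [← mulVec_mulVec, hM1v, hM2v]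

/-- The 4×4 block index type. -/
abbrev S4 : Type := (Unit ⊕ Unit) ⊕ (Unit ⊕ Unit)

/-- The 4×4 symplectic form matrix. -/
def J4 : Matrix S4 S4 ℝ := Matrix.fromBlocks 0 1 (-1) 0

lemma J4_antisym : J4ᵀ = -J4 := by
  ext i j
  rcases i with (i | i) | (i | i) <;> rcases j with (j | j) | (j | j) <;>
    simp [J4, fromBlocks, one_apply]

lemma J4_sq : J4 * J4 = -1 := by
  ext i j
  rcases i with (i | i) | (i | i) <;> rcases j with (j | j) | (j | j) <;>
    simp [J4, Matrix.mul_apply, fromBlocks, one_apply, Fintype.sum_sum_type]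

/-- Four reals as an `S4`-indexed vector. -/
def vec4 (a b c e : ℝ) : S4 → ℝ :=
  Sum.elim (Sum.elim (fun _ => a) (fun _ => b)) (Sum.elim (fun _ => c) (fun _ => e))

lemma vec4_eq_zero {a b c e : ℝ} (h : vec4 a b c e = 0) : a = 0 ∧ b = 0 ∧ c = 0 ∧ e = 0 := by
  refine ⟨congrFun h (Sum.inl (Sum.inl ())), congrFun h (Sum.inl (Sum.inr ())),
    congrFun h (Sum.inr (Sum.inl ())), congrFun h (Sum.inr (Sum.inr ()))⟩

lemma key4 (pk xk qk yk a b : ℝ)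
    (h1 : pk ^ 2 + xk ^ 2 + qk ^ 2 + yk ^ 2 ≠ 0 → ¬(a = 0 ∧ b = 0))
    (h0 : pk = 0 → xk = 0 → qk = 0 → yk = 0 → a = 0 ∧ b = 0) :
    ∃ m : Matrix S4 S4 ℝ, mᵀ * J4 * m = J4 ∧ m *ᵥ vec4 pk xk qk yk = vec4 a a b b := by
  by_cases hv : vec4 pk xk qk yk = 0
  · obtain ⟨hp, hx, hq, hy⟩ := vec4_eq_zero hv
    obtain ⟨ha, hb⟩ := h0 hp hx hq hy
    refine ⟨1, by simp, ?_⟩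
    rw [hv, one_mulVec]
    ext i
    rcases i with (i | i) | (i | i) <;> simp [vec4, ha, hb]
  · have hsq : pk ^ 2 + xk ^ 2 + qk ^ 2 + yk ^ 2 ≠ 0 := by
      intro hc
      apply hv
      have hp : pk = 0 := by nlinarith [sq_nonneg pk, sq_nonneg xk, sq_nonneg qk, sq_nonneg yk]
      have hx : xk = 0 := by nlinarith [sq_nonneg pk, sq_nonneg xk, sq_nonneg qk, sq_nonneg yk]
      have hq : qk = 0 := by nlinarith [sq_nonneg pk, sq_nonneg xk, sq_nonneg qk, sq_nonneg yk]
      have hy : yk = 0 := by nlinarith [sq_nonneg pk, sq_nonneg xk, sq_nonneg qk, sq_nonneg yk]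
      ext i
      rcases i with (i | i) | (i | i) <;> simp [vec4, hp, hx, hq, hy]
    have hw : vec4 a a b b ≠ 0 := by
      intro hc
      obtain ⟨ha, _, hb, _⟩ := vec4_eq_zero hc
      exact h1 hsq ⟨ha, hb⟩
    exact exists_symplectic_mulVec J4 J4_antisym J4_sq _ _ hv hw

/-- Reindexing equivalence. -/
def eqv (d : ℕ) : ((Fin d ⊕ Fin d) ⊕ (Fin d ⊕ Fin d)) ≃ S4 × Fin d where
  toFun := Sum.elim
    (Sum.elim (fun k => (Sum.inl (Sum.inl ()), k)) (fun k => (Sum.inl (Sum.inr ()), k)))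
    (Sum.elim (fun k => (Sum.inr (Sum.inl ()), k)) (fun k => (Sum.inr (Sum.inr ()), k)))
  invFun := fun sk => match sk.1 with
    | Sum.inl (Sum.inl _) => Sum.inl (Sum.inl sk.2)
    | Sum.inl (Sum.inr _) => Sum.inl (Sum.inr sk.2)
    | Sum.inr (Sum.inl _) => Sum.inr (Sum.inl sk.2)
    | Sum.inr (Sum.inr _) => Sum.inr (Sum.inr sk.2)
  left_inv := by rintro ((k | k) | (k | k)) <;> rfl
  right_inv := by rintro ⟨(⟨⟩ | ⟨⟩) | (⟨⟩ | ⟨⟩), k⟩ <;> rfl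

lemma Jhat_eq (d : ℕ) :
    Jhat d = (blockDiagonal fun _ : Fin d => J4).submatrix (eqv d) (eqv d) := by
  ext i j
  rcases i with (i | i) | (i | i) <;> rcases j with (j | j) | (j | j) <;>
    simp [Jhat, J4, eqv, fromBlocks, one_apply, blockDiagonal_apply, eq_comm] <;>
    split <;> simp

lemma blockDiagonal_mulVec' {o m : Type*} [Fintype o] [Fintype m] [DecidableEq o]
    (M : o → Matrix m m ℝ) (v : m × o → ℝ) :
    blockDiagonal M *ᵥ v = fun sk => (M sk.2 *ᵥ fun t => v (t, sk.2)) sk.1 := by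
  ext ⟨s, k⟩
  simp only [mulVec, dotProduct, Fintype.sum_prod_type, blockDiagonal_apply]
  rw [Finset.sum_comm]
  simp [Finset.sum_ite_eq, ite_mul]

end Aux

/-- Theorem 2 of the paper: for any `p, x, q, y ∈ ℝ^d` and weights `λ, ξ`
avoiding the degenerate values (whenever the `k`-th inputs do not all vanish,
not both weighted averages vanish), there is a symplectic matrix `M` sending
`(p, x, q, y)` to `(p̃, p̃, q̃, q̃)`. -/
theorem stmt9 (d : ℕ) (p x q y l ξ : Fin d → ℝ)
    (hnd : ∀ k, (p k) ^ 2 + (x k) ^ 2 + (q k) ^ 2 + (y k) ^ 2 ≠ 0 →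
      ¬(l k * p k + (1 - l k) * x k = 0 ∧ ξ k * q k + (1 - ξ k) * y k = 0)) :
    ∃ M : Matrix ((Fin d ⊕ Fin d) ⊕ (Fin d ⊕ Fin d))
        ((Fin d ⊕ Fin d) ⊕ (Fin d ⊕ Fin d)) ℝ,
      Mᵀ * Jhat d * M = Jhat d ∧
      M.mulVec (Sum.elim (Sum.elim p x) (Sum.elim q y)) =
        Sum.elim
          (Sum.elim (fun k => l k * p k + (1 - l k) * x k)
            (fun k => l k * p k + (1 - l k) * x k))
          (Sum.elim (fun k => ξ k * q k + (1 - ξ k) * y k)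
            (fun k => ξ k * q k + (1 - ξ k) * y k)) := by
  -- per-index 4×4 symplectic matrices
  have hm : ∀ k : Fin d, ∃ m : Matrix S4 S4 ℝ, mᵀ * J4 * m = J4 ∧
      m *ᵥ vec4 (p k) (x k) (q k) (y k) =
        vec4 (l k * p k + (1 - l k) * x k) (l k * p k + (1 - l k) * x k)
          (ξ k * q k + (1 - ξ k) * y k) (ξ k * q k + (1 - ξ k) * y k) := by
    intro k
    apply key4
    · exact hnd k
    · intro hp hx hq hy
      constructor <;> simp [hp, hx, hq, hy]
  choose m hms hmv using hm
  refine ⟨(blockDiagonal m).submatrix (eqv d) (eqv d), ?_, ?_⟩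
  · have hbd : (blockDiagonal fun k => (m k)ᵀ) * (blockDiagonal fun _ : Fin d => J4) *
        blockDiagonal m = blockDiagonal fun _ : Fin d => J4 := by
      rw [← blockDiagonal_mul, ← blockDiagonal_mul]
      exact congrArg _ (funext fun k => hms k)
    rw [Jhat_eq d, transpose_submatrix, blockDiagonal_transpose, submatrix_mul_equiv,
      submatrix_mul_equiv, hbd]
  · rw [submatrix_mulVec_equiv]
    have hv2 : Sum.elim (Sum.elim p x) (Sum.elim q y) =
        (fun sk : S4 × Fin d => vec4 (p sk.2) (x sk.2) (q sk.2) (y sk.2) sk.1) ∘ (eqv d) := by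
      funext i; rcases i with (k | k) | (k | k) <;> rfl
    rw [hv2]
    have hccl : ((fun sk : S4 × Fin d => vec4 (p sk.2) (x sk.2) (q sk.2) (y sk.2) sk.1) ∘
        (eqv d)) ∘ (eqv d).symm =
        fun sk : S4 × Fin d => vec4 (p sk.2) (x sk.2) (q sk.2) (y sk.2) sk.1 := by
      funext sk; simp
    rw [hccl, blockDiagonal_mulVec']
    funext i
    rcases i with (k | k) | (k | k) <;>
      exact congrFun (hmv k) _
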